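/- Let X and Y be locally compact Polish spaces and let π : X × Y → ℝ be bounded and of Baire class one (i.e., π is the pointwise limit of a sequence of continuous functions on X × Y). Then the best response relation E^π = {(s,μ) ∈ X × Δ(Y) : ∫ π(s,y) dμ(y) ≥ ∫ π(t,y) dμ(y) for all t ∈ X} is a Borel subset of X × Δ(Y). -/

import Mathlib

open MeasureTheory

open Filter Topology
open scoped ENNReal NNReal

lemma aux_cont {X Y : Type} [TopologicalSpace X]
    [TopologicalSpace Y] [PolishSpace Y] [LocallyCompactSpace Y]
    [MeasurableSpace Y] [BorelSpace Y]
    (F : C(X × Y, ℝ)) {M0 : ℝ} (hM0 : 0 < M0) (hM : ∀ p, |F p| ≤ M0) :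
    Continuous fun p : X × ProbabilityMeasure Y => ∫ y, F (p.1, y) ∂(p.2 : Measure Y) := by
  have hbcf : ∀ t : X, ∀ ν : Measure Y, IsProbabilityMeasure ν →
      Integrable (fun y => F (t, y)) ν := by
    intro t ν hν
    exact (BoundedContinuousFunction.ofNormedAddCommGroup (fun y => F (t, y))
      (F.continuous.comp (Continuous.prodMk_right t)) M0
      (fun y => hM (t, y))).integrable ν
  rw [continuous_iff_continuousAt]
  rintro ⟨s, μ⟩
  rw [ContinuousAt, Metric.tendsto_nhds]
  intro ε hε
  set δ : ℝ := ε / (2 * M0 + 3) with hδdef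
  have hδ : 0 < δ := div_pos hε (by linarith)
  -- compact set with large measure
  obtain ⟨j, hj⟩ : ∃ j, 1 - ENNReal.ofReal δ < (μ : Measure Y) (compactCovering Y j) := by
    have hmono : Monotone (compactCovering Y) := compactCovering_subset Y
    have htend : Tendsto (fun j => (μ : Measure Y) (compactCovering Y j)) atTop
        (𝓝 ((μ : Measure Y) (⋃ j, compactCovering Y j))) :=
      tendsto_measure_iUnion_atTop hmono
    rw [iUnion_compactCovering] at htend
    have h1 : (μ : Measure Y) Set.univ = 1 := measure_univ
    rw [h1] at htend
    have hlt : (1 : ℝ≥0∞) - ENNReal.ofReal δ < 1 := by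
      apply ENNReal.sub_lt_self ENNReal.one_ne_top one_ne_zero
      simpa using hδ
    exact (htend.eventually_const_lt hlt).exists
  set K : Set Y := compactCovering Y j with hK
  have hKc : IsCompact K := isCompact_compactCovering Y j
  obtain ⟨K', hK'c, hKK'⟩ := exists_compact_superset hKc
  set Fc : Set Y := (interior K')ᶜ with hFc
  have hFcclosed : IsClosed Fc := isOpen_interior.isClosed_compl
  have hμFc : (μ : Measure Y) Fc < ENNReal.ofReal δ := by
    have h1 : (μ : Measure Y) Fc ≤ (μ : Measure Y) Kᶜ := by
      apply measure_mono
      exact Set.compl_subset_compl.mpr hKK'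
    have h2 : (μ : Measure Y) Kᶜ < ENNReal.ofReal δ := by
      have hKm : MeasurableSet K := hKc.isClosed.measurableSet
      rw [measure_compl hKm (measure_ne_top _ _), measure_univ]
      have hle : (μ : Measure Y) K ≤ 1 := prob_le_one
      rw [ENNReal.sub_lt_iff_lt_right (measure_ne_top _ _) (by simpa using hle)]
      exact ENNReal.lt_add_of_sub_lt_left (Or.inl ENNReal.one_ne_top) hj
    exact lt_of_le_of_lt h1 h2
  -- uniform convergence on K'
  have huc : ∀ᶠ t in 𝓝 s, ∀ y ∈ K', dist (F.curry s y) (F.curry t y) < δ := by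
    have h1 : Tendsto (fun t => F.curry t) (𝓝 s) (𝓝 (F.curry s)) :=
      F.curry.continuous.tendsto s
    have h2 := (ContinuousMap.tendsto_iff_forall_isCompact_tendstoUniformlyOn.mp h1) K' hK'c
    exact (Metric.tendstoUniformlyOn_iff.mp h2) δ hδ
  have hmeas : ∀ᶠ ν : ProbabilityMeasure Y in 𝓝 μ, (ν : Measure Y) Fc < ENNReal.ofReal δ := by
    have hlim := ProbabilityMeasure.limsup_measure_closed_le_of_tendsto
      (tendsto_id (x := 𝓝 μ)) hFcclosed
    exact Filter.eventually_lt_of_limsup_lt (lt_of_le_of_lt hlim hμFc)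
  have hint2 : ∀ᶠ ν : ProbabilityMeasure Y in 𝓝 μ,
      dist (∫ y, F (s, y) ∂(ν : Measure Y)) (∫ y, F (s, y) ∂(μ : Measure Y)) < δ := by
    have htd := ProbabilityMeasure.tendsto_iff_forall_integral_tendsto.mp (tendsto_id (x := 𝓝 μ))
      (BoundedContinuousFunction.ofNormedAddCommGroup (fun y => F (s, y))
        (F.continuous.comp (Continuous.prodMk_right s)) M0 (fun y => hM (s, y)))
    have h' := Metric.tendsto_nhds.mp htd δ hδ
    simpa using h'
  rw [nhds_prod_eq]
  filter_upwards [huc.prod_mk (hmeas.and hint2)]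
  rintro ⟨t, ν⟩ ⟨hA, hB, hC⟩
  simp only []
  have i1 : Integrable (fun y => F (t, y)) (ν : Measure Y) := hbcf t _ inferInstance
  have i2 : Integrable (fun y => F (s, y)) (ν : Measure Y) := hbcf s _ inferInstance
  have key2 : ((ν : Measure Y) Fc).toReal < δ := ENNReal.toReal_lt_of_lt_ofReal hB
  have key1 : dist (∫ y, F (t, y) ∂(ν : Measure Y)) (∫ y, F (s, y) ∂(ν : Measure Y))
      ≤ δ + 2 * M0 * ((ν : Measure Y) Fc).toReal := by
    rw [Real.dist_eq, ← integral_sub i1 i2]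
    calc |∫ y, (F (t, y) - F (s, y)) ∂(ν : Measure Y)|
        ≤ ∫ y, |F (t, y) - F (s, y)| ∂(ν : Measure Y) := by
          simpa using norm_integral_le_integral_norm (μ := (ν : Measure Y))
            (fun y => F (t, y) - F (s, y))
      _ ≤ ∫ y, (δ + Fc.indicator (fun _ => 2 * M0) y) ∂(ν : Measure Y) := by
          apply integral_mono (i1.sub i2).abs
          · exact (integrable_const δ).add
              ((integrable_const (2 * M0)).indicator hFcclosed.measurableSet)
          · intro y
            simp only [Pi.sub_apply]
            by_cases hy : y ∈ Fc
            · rw [Set.indicator_of_mem hy]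
              have := abs_sub (F (t, y)) (F (s, y))
              have h2M : |F (t, y) - F (s, y)| ≤ 2 * M0 := by
                calc |F (t, y) - F (s, y)| ≤ |F (t, y)| + |F (s, y)| := abs_sub _ _
                  _ ≤ 2 * M0 := by have := hM (t, y); have := hM (s, y); linarith
              linarith
            · rw [Set.indicator_of_notMem hy]
              have hyK' : y ∈ K' := interior_subset (not_not.mp hy)
              have hd := hA y hyK'
              rw [Real.dist_eq] at hd
              have : |F (t, y) - F (s, y)| < δ := by
                rw [abs_sub_comm]
                exact hd
              linarith
      _ = δ + 2 * M0 * ((ν : Measure Y) Fc).toReal := by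
          rw [integral_add (integrable_const δ)
            ((integrable_const (2 * M0)).indicator hFcclosed.measurableSet),
            integral_const, integral_indicator_const _ hFcclosed.measurableSet]
          simp [measure_univ, mul_comm]
          exact Or.inl rfl
  calc dist (∫ y, F (t, y) ∂(ν : Measure Y)) (∫ y, F (s, y) ∂(μ : Measure Y))
      ≤ dist (∫ y, F (t, y) ∂(ν : Measure Y)) (∫ y, F (s, y) ∂(ν : Measure Y))
        + dist (∫ y, F (s, y) ∂(ν : Measure Y)) (∫ y, F (s, y) ∂(μ : Measure Y)) :=
        dist_triangle _ _ _
    _ < (δ + 2 * M0 * δ) + δ := by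
        have h1 : dist (∫ y, F (t, y) ∂(ν : Measure Y)) (∫ y, F (s, y) ∂(ν : Measure Y))
            < δ + 2 * M0 * δ := by
          refine lt_of_le_of_lt key1 ?_
          have : 2 * M0 * ((ν : Measure Y) Fc).toReal < 2 * M0 * δ := by
            apply mul_lt_mul_of_pos_left key2; linarith
          linarith
        exact add_lt_add h1 hC
    _ ≤ ε := by
        have : δ * (2 * M0 + 3) = ε := by
          rw [hδdef]; field_simp
        nlinarith [hδ.le, hM0.le]

/-- Let `X`, `Y` be locally compact Polish spaces and `π : X × Y → ℝ` be
bounded and of Baire class one (a pointwise limit of a sequence of continuous functions).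
Then the best response relation
`E^π = {(s, μ) ∈ X × Δ(Y) : ∫ π(s,y) dμ ≥ ∫ π(t,y) dμ for all t ∈ X}` is a Borel subset of
`X × Δ(Y)` (for the Borel σ-algebra of the product of the topology of `X` with the topology of
weak convergence on `Δ(Y)`). -/
theorem stmt_12
    {X Y : Type}
    [TopologicalSpace X] [PolishSpace X] [LocallyCompactSpace X]
    [MeasurableSpace X] [BorelSpace X]
    [TopologicalSpace Y] [PolishSpace Y] [LocallyCompactSpace Y]
    [MeasurableSpace Y] [BorelSpace Y]
    (π : X × Y → ℝ)
    (hbd : ∃ M : ℝ, ∀ p : X × Y, |π p| ≤ M)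
    (hBaire1 : ∃ f : ℕ → X × Y → ℝ, (∀ n, Continuous (f n)) ∧
      ∀ p : X × Y, Filter.Tendsto (fun n => f n p) Filter.atTop (nhds (π p))) :
    MeasurableSet[borel (X × ProbabilityMeasure Y)]
      {p : X × ProbabilityMeasure Y | ∀ t : X,
        ∫ y, π (p.1, y) ∂(p.2 : Measure Y) ≥ ∫ y, π (t, y) ∂(p.2 : Measure Y)} := by
  classical
  obtain ⟨M, hM⟩ := hbd
  obtain ⟨f, hfc, hfl⟩ := hBaire1
  set M0 : ℝ := |M| + 1 with hM0def
  have hM0 : 0 < M0 := by positivity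
  have hπM0 : ∀ p, |π p| ≤ M0 := fun p => (hM p).trans (by simp [hM0def]; linarith [le_abs_self M])
  -- truncation
  set F : ℕ → X × Y → ℝ := fun n p => max (-M0) (min M0 (f n p)) with hFdef
  have hFc : ∀ n, Continuous (F n) := fun n => continuous_const.max (continuous_const.min (hfc n))
  have hFbd : ∀ n p, |F n p| ≤ M0 := by
    intro n p
    rw [abs_le]
    constructor
    · exact le_max_left _ _
    · exact max_le (by linarith) (min_le_left _ _)
  have hFl : ∀ p, Filter.Tendsto (fun n => F n p) Filter.atTop (𝓝 (π p)) := by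
    intro p
    have hcont : Continuous fun x : ℝ => max (-M0) (min M0 x) :=
      continuous_const.max (continuous_const.min continuous_id)
    have := (hcont.tendsto (π p)).comp (hfl p)
    have heq : max (-M0) (min M0 (π p)) = π p := by
      have h1 := abs_le.mp (hπM0 p)
      rw [min_eq_right h1.2, max_eq_right h1.1]
    rw [heq] at this
    exact this
  -- the approximating integrals
  set g : ℕ → X × ProbabilityMeasure Y → ℝ :=
    fun n p => ∫ y, F n (p.1, y) ∂(p.2 : Measure Y) with hgdef
  have hgc : ∀ n, Continuous (g n) := fun n => aux_cont ⟨F n, hFc n⟩ hM0 (hFbd n)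
  -- π is measurable
  have hπm : Measurable π :=
    measurable_of_tendsto_metrizable (fun n => (hfc n).measurable) (tendsto_pi_nhds.mpr hfl)
  set G : X × ProbabilityMeasure Y → ℝ :=
    fun p => ∫ y, π (p.1, y) ∂(p.2 : Measure Y) with hGdef
  have hGint : ∀ (t : X) (ν : ProbabilityMeasure Y),
      Integrable (fun y => π (t, y)) (ν : Measure Y) := by
    intro t ν
    refine ⟨(hπm.comp (measurable_prodMk_left)).aestronglyMeasurable, ?_⟩
    apply MeasureTheory.HasFiniteIntegral.mono'
      (g := fun _ => M0) (integrable_const M0).hasFiniteIntegral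
    exact Filter.Eventually.of_forall fun y => hπM0 (t, y)
  have hGl : ∀ p, Filter.Tendsto (fun n => g n p) Filter.atTop (𝓝 (G p)) := by
    rintro ⟨t, ν⟩
    apply tendsto_integral_of_dominated_convergence (fun _ => M0)
    · exact fun n => ((hFc n).comp (Continuous.prodMk_right t)).aestronglyMeasurable
    · exact integrable_const M0
    · exact fun n => Filter.Eventually.of_forall fun y => hFbd n (t, y)
    · exact Filter.Eventually.of_forall fun y => hFl (t, y)
  -- borelize the product
  letI mXP : MeasurableSpace (X × ProbabilityMeasure Y) := borel _
  haveI hbXP : BorelSpace (X × ProbabilityMeasure Y) := ⟨rfl⟩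
  show MeasurableSet {p : X × ProbabilityMeasure Y | ∀ t : X, G p ≥ G (t, p.2)}
  have hGm : Measurable G :=
    measurable_of_tendsto_metrizable (fun n => (hgc n).measurable) (tendsto_pi_nhds.mpr hGl)
  -- rewrite as countable intersection
  have hset : {p : X × ProbabilityMeasure Y | ∀ t : X, G p ≥ G (t, p.2)} =
      ⋂ (q : ℚ), ({p | (q : ℝ) ≤ G p} ∪ {p | ∀ t : X, G (t, p.2) ≤ (q : ℝ)}) := by
    ext p
    simp only [Set.mem_setOf_eq, Set.mem_iInter, Set.mem_union]
    constructor
    · intro hp q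
      by_cases h : ∀ t : X, G (t, p.2) ≤ (q : ℝ)
      · exact Or.inr h
      · push_neg at h
        obtain ⟨t, ht⟩ := h
        exact Or.inl (le_trans ht.le (hp t))
    · intro hp t
      by_contra hc
      push_neg at hc
      obtain ⟨q, hq1, hq2⟩ := exists_rat_btwn hc
      rcases hp q with h | h
      · exact absurd h (not_le.mpr hq1)
      · exact absurd (h t) (not_le.mpr hq2)
  rw [hset]
  apply MeasurableSet.iInter
  intro q
  apply MeasurableSet.union
  · exact hGm measurableSet_Ici
  · -- the hard part
    have hrw : {p : X × ProbabilityMeasure Y | ∀ t : X, G (t, p.2) ≤ (q : ℝ)} =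
        (⋃ (k : ℕ) (m : ℕ) (j : ℕ),
          Prod.snd ⁻¹' {μ : ProbabilityMeasure Y | ∃ t ∈ compactCovering X j,
            ∀ n ≥ m, (q : ℝ) + 1 / (k + 1) ≤ g n (t, μ)})ᶜ := by
      ext p
      simp only [Set.mem_setOf_eq, Set.mem_compl_iff, Set.mem_iUnion, Set.mem_preimage]
      constructor
      · rintro hp ⟨k, m, j, t, -, hge⟩
        have : (q : ℝ) + 1 / (k + 1) ≤ G (t, p.2) :=
          ge_of_tendsto (hGl (t, p.2)) (Filter.eventually_atTop.mpr ⟨m, hge⟩)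
        have hpos : (0 : ℝ) < 1 / (k + 1) := by positivity
        linarith [hp t]
      · intro hp t
        by_contra hc
        push_neg at hc
        obtain ⟨k, hk⟩ := exists_nat_one_div_lt (sub_pos.mpr hc)
        have hklt : (q : ℝ) + 1 / (k + 1) < G (t, p.2) := by
          have : (1 : ℝ) / (k + 1) < G (t, p.2) - q := hk
          linarith
        have hev := (hGl (t, p.2)).eventually_const_lt hklt
        obtain ⟨m, hm⟩ := Filter.eventually_atTop.mp hev
        obtain ⟨j, hj⟩ : ∃ j, t ∈ compactCovering X j := by
          have := iUnion_compactCovering X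
          have ht : t ∈ ⋃ j, compactCovering X j := by rw [this]; trivial
          exact Set.mem_iUnion.mp ht
        exact hp ⟨k, m, j, t, hj, fun n hn => (hm n hn).le⟩
    rw [hrw]
    apply MeasurableSet.compl
    apply MeasurableSet.iUnion; intro k
    apply MeasurableSet.iUnion; intro m
    apply MeasurableSet.iUnion; intro j
    -- closedness of the projected set
    have hTclosed : IsClosed {μ : ProbabilityMeasure Y | ∃ t ∈ compactCovering X j,
        ∀ n ≥ m, (q : ℝ) + 1 / (k + 1) ≤ g n (t, μ)} := by
      set c : ℝ := (q : ℝ) + 1 / (k + 1)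
      set K : Set X := compactCovering X j with hKdef
      have hKc : IsCompact K := isCompact_compactCovering X j
      haveI : CompactSpace K := isCompact_iff_compactSpace.mp hKc
      have hS : IsClosed {r : K × ProbabilityMeasure Y | ∀ n ≥ m, c ≤ g n ((r.1 : X), r.2)} := by
        have : {r : K × ProbabilityMeasure Y | ∀ n ≥ m, c ≤ g n ((r.1 : X), r.2)} =
            ⋂ (n : ℕ) (_ : n ≥ m), {r : K × ProbabilityMeasure Y | c ≤ g n ((r.1 : X), r.2)} := by
          ext r; simp [Set.mem_iInter]
        rw [this]
        apply isClosed_iInter; intro n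
        apply isClosed_iInter; intro _
        exact isClosed_le continuous_const
          ((hgc n).comp ((continuous_subtype_val.comp continuous_fst).prodMk continuous_snd))
      have himg : {μ : ProbabilityMeasure Y | ∃ t ∈ K, ∀ n ≥ m, c ≤ g n (t, μ)} =
          Prod.snd '' {r : K × ProbabilityMeasure Y | ∀ n ≥ m, c ≤ g n ((r.1 : X), r.2)} := by
        ext μ
        simp only [Set.mem_setOf_eq, Set.mem_image, Prod.exists]
        constructor
        · rintro ⟨t, htK, h⟩
          exact ⟨⟨t, htK⟩, μ, h, rfl⟩
        · rintro ⟨t, μ', h, rfl⟩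
          exact ⟨t, t.2, h⟩
      rw [himg]
      exact isClosedMap_snd_of_compactSpace _ hS
    exact (hTclosed.preimage continuous_snd).measurableSet
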